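/- Let G be a weighted graph on N vertices with combinatorial Laplacian L, let μ be a finitely supported probability distribution on the set of contracted matchings of G with edge-contraction probabilities q_{ij}, and let x ∈ ℝ^N be a unit eigenvector of L with eigenvalue λ. Then E_{E_F ∼ μ}[ xᵀ Π_F L Π_F x ] − λ = (1/4) Σ_{{i,j} ∈ E} q_{ij} (x(i) − x(j))² (d_i + d_j + 2 W(i,j) − 4λ), where the sum runs over the edges of G. -/
import Mathlib


open Matrix

/-- The combinatorial Laplacian `L = D - W`. -/
def lap {N : ℕ} (W : Matrix (Fin N) (Fin N) ℝ) : Matrix (Fin N) (Fin N) ℝ :=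
  Matrix.diagonal (fun i => ∑ j, W i j) - W

/-- `W` is the weight matrix of a weighted graph: symmetric, nonnegative, zero diagonal. -/
def IsWeightedGraph {N : ℕ} (W : Matrix (Fin N) (Fin N) ℝ) : Prop :=
  (∀ i j, W i j = W j i) ∧ (∀ i j, 0 ≤ W i j) ∧ (∀ i, W i i = 0)

/-- A contracted matching of the weighted graph given by `W`: a finite set of edges
(each recorded once, as an ordered pair `(i,j)` with `W i j > 0` and `i ≠ j`) such that for any
two distinct edges `{i,j}`, `{p,q}` all of `W i p`, `W i q`, `W j p`, `W j q` vanish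
(in particular the edges are vertex-disjoint, and no vertex of one edge is adjacent to a vertex
of another one). -/
def IsContractedMatching {N : ℕ} (W : Matrix (Fin N) (Fin N) ℝ)
    (EF : Finset (Fin N × Fin N)) : Prop :=
  (∀ e ∈ EF, e.1 ≠ e.2 ∧ 0 < W e.1 e.2) ∧
  (∀ e ∈ EF, ∀ e' ∈ EF, e ≠ e' →
    W e.1 e'.1 = 0 ∧ W e.1 e'.2 = 0 ∧ W e.2 e'.1 = 0 ∧ W e.2 e'.2 = 0)

open scoped Classical in
/-- The averaging projection `Π_F` associated with a (vertex-disjoint) set of edges `E_F`: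
`(Π_F x)(i) = (Π_F x)(j) = (x(i)+x(j))/2` for every `{i,j} ∈ E_F`, and `(Π_F x)(ℓ) = x(ℓ)` for
every vertex `ℓ` not incident to an edge of `E_F`. -/
noncomputable def avgProj {N : ℕ} (EF : Finset (Fin N × Fin N)) :
    Matrix (Fin N) (Fin N) ℝ :=
  Matrix.of fun a b =>
    if a = b then (if ∃ e ∈ EF, a = e.1 ∨ a = e.2 then (1 : ℝ) / 2 else 1)
    else if (a, b) ∈ EF ∨ (b, a) ∈ EF then 1 / 2 else 0

open scoped Classical in
/-- Given a finitely supported distribution on contracted matchings, described by a finite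
support `Ω` and a weight function `p`, the edge-contraction probability
`q_{ij} = μ({E_F : {i,j} ∈ E_F})` of the (unordered) edge `{i,j}`. -/
noncomputable def edgeProb {N : ℕ} (Ω : Finset (Finset (Fin N × Fin N)))
    (p : Finset (Fin N × Fin N) → ℝ) (i j : Fin N) : ℝ :=
  ∑ F ∈ Ω.filter (fun F => (i, j) ∈ F ∨ (j, i) ∈ F), p F

section
variable {N : ℕ} {W : Matrix (Fin N) (Fin N) ℝ} {F : Finset (Fin N × Fin N)}

def ind (i j : Fin N) : Fin N → ℝ := fun ℓ => (if ℓ = i then 1 else 0) - (if ℓ = j then 1 else 0)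

lemma ind_dot (i j : Fin N) (w : Fin N → ℝ) : ind i j ⬝ᵥ w = w i - w j := by
  simp [ind, dotProduct, sub_mul, Finset.sum_sub_distrib]

lemma mulVec_ind (M : Matrix (Fin N) (Fin N) ℝ) (p q a : Fin N) :
    (M *ᵥ ind p q) a = M a p - M a q := by
  simp [ind, mulVec, dotProduct, mul_sub, Finset.sum_sub_distrib]

lemma ind_lap (M : Matrix (Fin N) (Fin N) ℝ) (i j p q : Fin N) :
    ind i j ⬝ᵥ (M *ᵥ ind p q) = M i p - M i q - M j p + M j q := by
  rw [ind_dot, mulVec_ind, mulVec_ind]; ring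

lemma dot_sum {ι : Type*} (s : Finset ι) (v : Fin N → ℝ) (f : ι → Fin N → ℝ) :
    v ⬝ᵥ (∑ i ∈ s, f i) = ∑ i ∈ s, v ⬝ᵥ f i := by
  simp only [dotProduct, Finset.sum_apply, Finset.mul_sum]
  rw [Finset.sum_comm]

lemma match_uniq (hW : IsWeightedGraph W) (hF : IsContractedMatching W F)
    {e₀ e : Fin N × Fin N} (he₀ : e₀ ∈ F) (he : e ∈ F) {a : Fin N}
    (ha : a = e₀.1 ∨ a = e₀.2) (ha' : a = e.1 ∨ a = e.2) : e = e₀ := by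
  by_contra hne
  obtain ⟨h1, h2, h3, h4⟩ := hF.2 e₀ he₀ e he (Ne.symm hne)
  have hpos := (hF.1 e he).2
  have hsym := hW.1 e.2 e.1
  rcases ha with rfl | rfl <;> rcases ha' with h | h
  · rw [h] at h2; linarith
  · rw [h] at h1; rw [hsym] at h1; linarith
  · rw [h] at h4; linarith
  · rw [h] at h3; rw [hsym] at h3; linarith

open scoped Classical in
lemma avg_row (hW : IsWeightedGraph W) (hF : IsContractedMatching W F) {a c : Fin N}
    (hedge : (a, c) ∈ F ∨ (c, a) ∈ F) (hac : a ≠ c) (b : Fin N) :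
    avgProj F a b = (if b = a then 1/2 else 0) + (if b = c then 1/2 else 0) := by
  have hex : ∃ e ∈ F, a = e.1 ∨ a = e.2 := by
    rcases hedge with h | h
    · exact ⟨(a, c), h, Or.inl rfl⟩
    · exact ⟨(c, a), h, Or.inr rfl⟩
  rcases eq_or_ne b a with rfl | hba
  · have h1 : avgProj F b b = 1/2 := by
      rw [avgProj]; simp only [of_apply, if_pos rfl]; exact if_pos hex
    rw [h1, if_pos rfl, if_neg hac]; norm_num
  · rcases eq_or_ne b c with rfl | hbc
    · simp [avgProj, Ne.symm hba, hedge, hba]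
    · have hmem : ¬((a, b) ∈ F ∨ (b, a) ∈ F) := by
        rintro (h' | h')
        · rcases hedge with h | h
          · have := match_uniq hW hF h h' (Or.inl rfl) (Or.inl rfl)
            exact hbc (congrArg Prod.snd this)
          · have := match_uniq hW hF h h' (Or.inr rfl) (Or.inl rfl)
            exact hac (congrArg Prod.fst this)
        · rcases hedge with h | h
          · have := match_uniq hW hF h h' (Or.inl rfl) (Or.inr rfl)
            exact hac (congrArg Prod.snd this)
          · have := match_uniq hW hF h h' (Or.inr rfl) (Or.inr rfl)
            exact hbc (congrArg Prod.fst this)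
      simp [avgProj, Ne.symm hba, hba, hbc, hmem]

lemma sum_at (hW : IsWeightedGraph W) (hF : IsContractedMatching W F) (x : Fin N → ℝ)
    {a c : Fin N} (hedge : (a, c) ∈ F ∨ (c, a) ∈ F) :
    (∑ e ∈ F, ((x e.1 - x e.2)/2) • ind e.1 e.2) a = (x a - x c) / 2 := by
  have hac : a ≠ c := by
    rcases hedge with h | h
    · exact (hF.1 _ h).1
    · exact ((hF.1 _ h).1).symm
  rw [Finset.sum_apply]
  rcases hedge with h | h
  · rw [Finset.sum_eq_single (a, c)]
    · simp [ind, hac, Ne.symm hac]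
    · intro e he hne
      have h1 : a ≠ e.1 := fun hh => hne (match_uniq hW hF h he (Or.inl rfl) (Or.inl hh))
      have h2 : a ≠ e.2 := fun hh => hne (match_uniq hW hF h he (Or.inl rfl) (Or.inr hh))
      simp [ind, h1, h2]
    · intro hn; exact absurd h hn
  · rw [Finset.sum_eq_single (c, a)]
    · simp [ind, hac, Ne.symm hac]
      ring
    · intro e he hne
      have h1 : a ≠ e.1 := fun hh => hne (match_uniq hW hF h he (Or.inr rfl) (Or.inl hh))
      have h2 : a ≠ e.2 := fun hh => hne (match_uniq hW hF h he (Or.inr rfl) (Or.inr hh))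
      simp [ind, h1, h2]
    · intro hn; exact absurd h hn

lemma avg_eq (hW : IsWeightedGraph W) (hF : IsContractedMatching W F) (x : Fin N → ℝ) :
    avgProj F *ᵥ x = x - ∑ e ∈ F, ((x e.1 - x e.2)/2) • ind e.1 e.2 := by
  funext a
  rw [Pi.sub_apply]
  by_cases hmat : ∃ e ∈ F, a = e.1 ∨ a = e.2
  · obtain ⟨e₀, he₀, ha⟩ := hmat
    have hij : e₀.1 ≠ e₀.2 := (hF.1 e₀ he₀).1
    obtain ⟨c, hedge, hac⟩ : ∃ c, ((a, c) ∈ F ∨ (c, a) ∈ F) ∧ a ≠ c := by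
      rcases ha with rfl | rfl
      · exact ⟨e₀.2, Or.inl (by simpa using he₀), hij⟩
      · exact ⟨e₀.1, Or.inr (by simpa using he₀), hij.symm⟩
    have hL : (avgProj F *ᵥ x) a = x a / 2 + x c / 2 := by
      simp only [mulVec, dotProduct, avg_row hW hF hedge hac, add_mul, ite_mul, zero_mul,
        one_mul, Finset.sum_add_distrib, Finset.sum_ite_eq', Finset.mem_univ, if_pos]
      ring
    rw [hL, sum_at hW hF x hedge]; ring
  · have hrow : ∀ b, avgProj F a b = if b = a then 1 else 0 := by
      intro b
      rcases eq_or_ne b a with rfl | hba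
      · have h1 : avgProj F b b = 1 := by
          rw [avgProj]; simp only [of_apply, if_pos rfl]; exact if_neg hmat
        rw [h1, if_pos rfl]
      · have hmem : ¬((a, b) ∈ F ∨ (b, a) ∈ F) := by
          rintro (h | h)
          · exact hmat ⟨(a, b), h, Or.inl rfl⟩
          · exact hmat ⟨(b, a), h, Or.inr rfl⟩
        simp [avgProj, Ne.symm hba, hba, hmem]
    have hR : (∑ e ∈ F, ((x e.1 - x e.2)/2) • ind e.1 e.2) a = 0 := by
      rw [Finset.sum_apply]
      apply Finset.sum_eq_zero
      intro e he
      have h1 : a ≠ e.1 := fun hh => hmat ⟨e, he, Or.inl hh⟩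
      have h2 : a ≠ e.2 := fun hh => hmat ⟨e, he, Or.inr hh⟩
      simp [ind, h1, h2]
    rw [hR, sub_zero]
    simp [mulVec, dotProduct, hrow, ite_mul, zero_mul, one_mul, Finset.sum_ite_eq']

lemma sum_dot {ι : Type*} (s : Finset ι) (f : ι → Fin N → ℝ) (v : Fin N → ℝ) :
    (∑ i ∈ s, f i) ⬝ᵥ v = ∑ i ∈ s, f i ⬝ᵥ v := by
  simp only [dotProduct, Finset.sum_apply, Finset.sum_mul]
  rw [Finset.sum_comm]

lemma mulVec_sum' {ι : Type*} (M : Matrix (Fin N) (Fin N) ℝ) (s : Finset ι)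
    (f : ι → Fin N → ℝ) : M *ᵥ (∑ i ∈ s, f i) = ∑ i ∈ s, M *ᵥ f i := by
  funext a
  simp only [mulVec, dotProduct, Finset.sum_apply, Finset.mul_sum]
  rw [Finset.sum_comm]

lemma lap_symmB (hW : IsWeightedGraph W) (u v : Fin N → ℝ) :
    u ⬝ᵥ (lap W *ᵥ v) = v ⬝ᵥ (lap W *ᵥ u) := by
  have hs : (lap W)ᵀ = lap W := by
    rw [lap, transpose_sub, diagonal_transpose]
    congr 1
    ext a b
    exact hW.1 b a
  rw [dotProduct_mulVec, ← mulVec_transpose, hs, dotProduct_comm]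

lemma lap_cross (hW : IsWeightedGraph W) (hF : IsContractedMatching W F)
    {e e' : Fin N × Fin N} (he : e ∈ F) (he' : e' ∈ F) (hne : e ≠ e') :
    ind e.1 e.2 ⬝ᵥ (lap W *ᵥ ind e'.1 e'.2) = 0 := by
  obtain ⟨h1, h2, h3, h4⟩ := hF.2 e he e' he' hne
  have d11 : e.1 ≠ e'.1 := fun hh => hne (match_uniq hW hF he' he (Or.inl hh) (Or.inl rfl))
  have d12 : e.1 ≠ e'.2 := fun hh => hne (match_uniq hW hF he' he (Or.inr hh) (Or.inl rfl))
  have d21 : e.2 ≠ e'.1 := fun hh => hne (match_uniq hW hF he' he (Or.inl hh) (Or.inr rfl))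
  have d22 : e.2 ≠ e'.2 := fun hh => hne (match_uniq hW hF he' he (Or.inr hh) (Or.inr rfl))
  rw [ind_lap]
  have l11 : lap W e.1 e'.1 = 0 := by simp [lap, diagonal, d11, h1]
  have l12 : lap W e.1 e'.2 = 0 := by simp [lap, diagonal, d12, h2]
  have l21 : lap W e.2 e'.1 = 0 := by simp [lap, diagonal, d21, h3]
  have l22 : lap W e.2 e'.2 = 0 := by simp [lap, diagonal, d22, h4]
  rw [l11, l12, l21, l22]; ring

lemma lap_self (hW : IsWeightedGraph W) {i j : Fin N} (hij : i ≠ j) :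
    ind i j ⬝ᵥ (lap W *ᵥ ind i j) = (∑ ℓ, W i ℓ) + (∑ ℓ, W j ℓ) + 2 * W i j := by
  rw [ind_lap]
  have lii : lap W i i = ∑ ℓ, W i ℓ := by simp [lap, diagonal, hW.2.2 i]
  have ljj : lap W j j = ∑ ℓ, W j ℓ := by simp [lap, diagonal, hW.2.2 j]
  have lij : lap W i j = -W i j := by simp [lap, diagonal, hij]
  have lji : lap W j i = -W i j := by
    have hji : W j i = W i j := hW.1 j i
    simp [lap, diagonal, Ne.symm hij, hji]
  rw [lii, ljj, lij, lji]; ring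

set_option maxHeartbeats 800000 in
lemma keylemma (hW : IsWeightedGraph W) (hF : IsContractedMatching W F)
    (x : Fin N → ℝ) (lam : ℝ) (heig : lap W *ᵥ x = lam • x) (hunit : x ⬝ᵥ x = 1) :
    (avgProj F *ᵥ x) ⬝ᵥ (lap W *ᵥ (avgProj F *ᵥ x)) - lam =
      ∑ e ∈ F, (1/4) * ((x e.1 - x e.2)^2 *
        ((∑ ℓ, W e.1 ℓ) + (∑ ℓ, W e.2 ℓ) + 2 * W e.1 e.2 - 4 * lam)) := by
  classical
  set z : Fin N → ℝ := ∑ e ∈ F, ((x e.1 - x e.2)/2) • ind e.1 e.2 with hz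
  rw [avg_eq hW hF x, ← hz]
  have hzx : z ⬝ᵥ x = ∑ e ∈ F, (x e.1 - x e.2)^2 / 2 := by
    rw [hz, sum_dot]
    refine Finset.sum_congr rfl fun e he => ?_
    rw [smul_dotProduct, ind_dot, smul_eq_mul]; ring
  have hzLx : z ⬝ᵥ (lap W *ᵥ x) = lam * ∑ e ∈ F, (x e.1 - x e.2)^2 / 2 := by
    rw [heig, dotProduct_smul, hzx, smul_eq_mul]
  have hzLz : z ⬝ᵥ (lap W *ᵥ z) = ∑ e ∈ F, ((x e.1 - x e.2)^2 / 4) *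
      ((∑ ℓ, W e.1 ℓ) + (∑ ℓ, W e.2 ℓ) + 2 * W e.1 e.2) := by
    rw [hz, sum_dot]
    refine Finset.sum_congr rfl fun e he => ?_
    rw [smul_dotProduct, mulVec_sum', dot_sum]
    rw [Finset.sum_eq_single e]
    · rw [mulVec_smul, dotProduct_smul, lap_self hW (hF.1 e he).1, smul_eq_mul, smul_eq_mul]
      ring
    · intro e' he' hne
      rw [mulVec_smul, dotProduct_smul, lap_cross hW hF he he' (Ne.symm hne)]
      simp
    · intro h; exact absurd he h
  have hxLx : x ⬝ᵥ (lap W *ᵥ x) = lam := by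
    rw [heig, dotProduct_smul, hunit, smul_eq_mul, mul_one]
  rw [mulVec_sub, dotProduct_sub, sub_dotProduct, sub_dotProduct]
  rw [hxLx, lap_symmB hW x z, hzLx, hzLz]
  have key : ∀ T Q R : ℝ, Q - 2 * T = R → lam - T - (T - Q) - lam = R := by
    intro T Q R h; linarith
  apply key
  rw [Finset.mul_sum, Finset.mul_sum, ← Finset.sum_sub_distrib]
  exact Finset.sum_congr rfl fun e he => by ring


lemma not_both (hF : IsContractedMatching W F) {e : Fin N × Fin N} (he : e ∈ F) :
    (e.2, e.1) ∉ F := by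
  intro h
  have hne : e ≠ (e.2, e.1) := by
    intro heq
    exact (hF.1 e he).1 (congrArg Prod.fst heq)
  exact absurd (hF.2 e he (e.2, e.1) h hne).1 (ne_of_gt (hF.1 e he).2)

end


/-- for a finitely supported probability distribution `μ` (support `Ω`, weights
`p`) on contracted matchings of `G`, with edge-contraction probabilities `q_{ij}`, and a unit
eigenvector `x` of `L` with eigenvalue `λ`,
`E_{E_F∼μ}[xᵀ Π_F L Π_F x] − λ
  = (1/4) Σ_{{i,j} ∈ E} q_{ij} (x(i) − x(j))² (d_i + d_j + 2 W(i,j) − 4λ)`,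
the sum running over the edges of `G` (each unordered edge represented once, as `(i,j)` with
`i < j`). -/
theorem expected_avgProj_laplacian_quadform {N : ℕ} (W : Matrix (Fin N) (Fin N) ℝ)
    (hW : IsWeightedGraph W)
    (Ω : Finset (Finset (Fin N × Fin N))) (p : Finset (Fin N × Fin N) → ℝ)
    (hmatch : ∀ F ∈ Ω, IsContractedMatching W F)
    (hp : ∀ F ∈ Ω, 0 ≤ p F) (hsum : ∑ F ∈ Ω, p F = 1)
    (x : Fin N → ℝ) (lam : ℝ)
    (heig : lap W *ᵥ x = lam • x) (hunit : x ⬝ᵥ x = 1) :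
    (∑ F ∈ Ω, p F * ((avgProj F *ᵥ x) ⬝ᵥ (lap W *ᵥ (avgProj F *ᵥ x)))) - lam =
      (1 / 4) * ∑ e ∈ Finset.univ.filter
          (fun e : Fin N × Fin N => e.1 < e.2 ∧ 0 < W e.1 e.2),
        edgeProb Ω p e.1 e.2 * (x e.1 - x e.2) ^ 2 *
          ((∑ ℓ, W e.1 ℓ) + (∑ ℓ, W e.2 ℓ) + 2 * W e.1 e.2 - 4 * lam) := by
  classical
  set g : Fin N × Fin N → ℝ := fun e => (1/4) * ((x e.1 - x e.2)^2 *
    ((∑ ℓ, W e.1 ℓ) + (∑ ℓ, W e.2 ℓ) + 2 * W e.1 e.2 - 4 * lam)) with hg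
  set S : Finset (Fin N × Fin N) :=
    Finset.univ.filter (fun e : Fin N × Fin N => e.1 < e.2 ∧ 0 < W e.1 e.2) with hS
  have hgswap : ∀ e : Fin N × Fin N, g (e.2, e.1) = g e := by
    intro e
    simp only [hg]
    rw [hW.1 e.2 e.1]
    ring
  have hre : ∀ F ∈ Ω, (∑ e ∈ F, g e)
      = ∑ e ∈ S, (if e ∈ F ∨ (e.2, e.1) ∈ F then g e else 0) := by
    intro F hFΩ
    have hF := hmatch F hFΩ
    rw [← Finset.sum_filter]
    refine Finset.sum_nbij' (fun e => if e.1 < e.2 then e else (e.2, e.1))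
      (fun e => if e ∈ F then e else (e.2, e.1)) ?_ ?_ ?_ ?_ ?_
    · intro e he
      beta_reduce
      obtain ⟨hne, hpos⟩ := hF.1 e he
      rcases lt_or_gt_of_ne hne with h | h
      · rw [if_pos h]
        simp only [Finset.mem_filter, hS, Finset.mem_univ, true_and]
        exact ⟨⟨h, hpos⟩, Or.inl he⟩
      · rw [if_neg (not_lt.mpr (le_of_lt h))]
        simp only [Finset.mem_filter, hS, Finset.mem_univ, true_and]
        refine ⟨⟨h, by rw [hW.1 e.2 e.1]; exact hpos⟩, Or.inr (by simpa using he)⟩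
    · intro e he
      beta_reduce
      simp only [Finset.mem_filter, hS] at he
      by_cases h : e ∈ F
      · rw [if_pos h]; exact h
      · rw [if_neg h]
        rcases he.2 with h' | h'
        · exact absurd h' h
        · exact h'
    · intro e he
      beta_reduce
      by_cases h : e.1 < e.2
      · rw [if_pos h]; beta_reduce; rw [if_pos he]
      · rw [if_neg h]; beta_reduce; rw [if_neg (not_both hF he)]
    · intro e he
      beta_reduce
      simp only [Finset.mem_filter, hS, Finset.mem_univ, true_and] at he
      by_cases h : e ∈ F
      · rw [if_pos h]; beta_reduce; rw [if_pos he.1.1]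
      · rw [if_neg h]; beta_reduce
        rw [if_neg (by simpa using (asymm he.1.1 : ¬ e.2 < e.1))]
    · intro e he
      beta_reduce
      by_cases h : e.1 < e.2
      · rw [if_pos h]
      · rw [if_neg h, hgswap]
  have hmain : ∀ F ∈ Ω, p F * ((avgProj F *ᵥ x) ⬝ᵥ (lap W *ᵥ (avgProj F *ᵥ x)))
      = p F * lam + ∑ e ∈ S, (if e ∈ F ∨ (e.2, e.1) ∈ F then p F * g e else 0) := by
    intro F hFΩ
    have hk := keylemma hW (hmatch F hFΩ) x lam heig hunit
    have hB : (avgProj F *ᵥ x) ⬝ᵥ (lap W *ᵥ (avgProj F *ᵥ x)) = lam + ∑ e ∈ F, g e := by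
      rw [hg]; linarith [hk]
    rw [hB, hre F hFΩ, mul_add, Finset.mul_sum]
    congr 1
    refine Finset.sum_congr rfl fun e he => ?_
    rw [mul_ite, mul_zero]
  rw [Finset.sum_congr rfl hmain, Finset.sum_add_distrib, ← Finset.sum_mul, hsum, one_mul,
    Finset.sum_comm]
  have hlam : ∀ X : ℝ, lam + X - lam = X := fun X => by ring
  rw [hlam]
  rw [Finset.mul_sum]
  refine Finset.sum_congr rfl fun e he => ?_
  rw [← Finset.sum_filter, ← Finset.sum_mul]
  rw [edgeProb]
  have hfilt : Ω.filter (fun F => e ∈ F ∨ (e.2, e.1) ∈ F)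
      = Ω.filter (fun F => (e.1, e.2) ∈ F ∨ (e.2, e.1) ∈ F) := by
    simp
  rw [hfilt, hg]
  ring
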